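/- Let p(z) = Π_{j=1}^n (z - w_j)^{μ_j} and write 1/p(z) = Σ_{j=1}^n Σ_{k=1}^{μ_j} c_{j,k}/(z - w_j)^k (partial fraction decomposition). Then the operator R_0^{(p)} on polynomials (defined by (R_0^{(p)}f)(z) = (f(z) - Z(z)V^{-1}C_w f)/p(z)) equals Σ_{j=1}^n Σ_{k=1}^{μ_j} c_{j,k} R_{w_j}^k, where (R_w f)(z) = (f(z) - f(w))/(z - w) is the backward shift at w. -/

import Mathlib

open Polynomial

/-- The backward shift at `w` on polynomials: `(R_w f)(z) = (f(z) - f(w))/(z - w)`. -/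
noncomputable def backShift (w : ℂ) (f : Polynomial ℂ) : Polynomial ℂ :=
  (f - C (f.eval w)) /ₘ (X - C w)

lemma X_sub_C_mul_backShift (w : ℂ) (f : ℂ[X]) :
    (X - C w) * backShift w f = f - C (f.eval w) := by
  unfold backShift
  have h := modByMonic_add_div (f - C (f.eval w)) (X - C w)
  rw [modByMonic_X_sub_C_eq_C_eval] at h
  simp at h
  linear_combination h

lemma degree_sub_backShift_iterate (w : ℂ) (f : ℂ[X]) (m : ℕ) :
    (f - (X - C w) ^ m * (backShift w)^[m] f).degree < (m : WithBot ℕ) := by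
  induction m with
  | zero => simp
  | succ m ih =>
    rw [Function.iterate_succ_apply']
    have h1 : (X - C w) ^ (m + 1) * backShift w ((backShift w)^[m] f)
        = (X - C w) ^ m * ((backShift w)^[m] f - C (((backShift w)^[m] f).eval w)) := by
      rw [pow_succ, mul_assoc, X_sub_C_mul_backShift]
    rw [h1]
    have h2 : f - (X - C w) ^ m * ((backShift w)^[m] f - C (((backShift w)^[m] f).eval w))
        = (f - (X - C w) ^ m * (backShift w)^[m] f)
          + (X - C w) ^ m * C (((backShift w)^[m] f).eval w) := by ring
    rw [h2]
    refine lt_of_le_of_lt (degree_add_le _ _) (max_lt ?_ ?_)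
    · exact lt_of_lt_of_le ih (by exact_mod_cast WithBot.coe_le_coe.mpr (Nat.le_succ m))
    · refine lt_of_le_of_lt (degree_mul_le _ _) ?_
      have h3 : ((X - C w) ^ m).degree = (m : WithBot ℕ) := by
        simp [degree_pow, degree_X_sub_C]
      rw [h3]
      calc (m : WithBot ℕ) + (C (((backShift w)^[m] f).eval w)).degree
          ≤ (m : WithBot ℕ) + 0 := add_le_add_right degree_C_le _
        _ < ((m + 1 : ℕ) : WithBot ℕ) := by
            rw [add_zero]
            exact_mod_cast WithBot.coe_lt_coe.mpr (Nat.lt_succ_self m)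

lemma iterate_derivative_eval_eq_zero {h : ℂ[X]} {a : ℂ} {m k : ℕ}
    (hd : (X - C a) ^ m ∣ h) (hk : k < m) : (Polynomial.derivative^[k] h).eval a = 0 := by
  rcases eq_or_ne h 0 with rfl | h0
  · simp [iterate_derivative_zero]
  · have : k < h.rootMultiplicity a := lt_of_lt_of_le hk ((le_rootMultiplicity_iff h0).mpr hd)
    exact isRoot_iterate_derivative_of_lt_rootMultiplicity this

lemma dvd_of_iterate_derivative_eval_eq_zero {h : ℂ[X]} {a : ℂ} {m : ℕ} (hm : 1 ≤ m)
    (hroot : ∀ k < m, (Polynomial.derivative^[k] h).eval a = 0) : (X - C a) ^ m ∣ h := by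
  rcases eq_or_ne h 0 with rfl | h0
  · exact dvd_zero _
  · have : m - 1 < h.rootMultiplicity a := by
      apply lt_rootMultiplicity_of_isRoot_iterate_derivative_of_mem_nonZeroDivisors' h0
      · intro k hk
        exact hroot k (lt_of_le_of_lt hk (Nat.sub_lt hm Nat.one_pos))
      · intro k _ hk0
        exact mem_nonZeroDivisors_of_ne_zero (Nat.cast_ne_zero.mpr hk0)
    have hle : m ≤ h.rootMultiplicity a := by omega
    exact dvd_trans (pow_dvd_pow _ hle) (h.pow_rootMultiplicity_dvd a)

/-- If `1/p(z) = ∑_j ∑_{k=1}^{μ_j} c_{j,k}/(z - w_j)^k` is the partial fraction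
decomposition of `1/p`, then the operator `R_0^{(p)} f = (f - Z V⁻¹ C_w f)/p` equals
`∑_j ∑_k c_{j,k} R_{w_j}^k` on polynomials. -/
theorem R0p_eq_sum_backshifts (n N : ℕ) (w : Fin n → ℂ) (hw : Function.Injective w)
    (μ : Fin n → ℕ) (hμ : ∀ j, 1 ≤ μ j) (hN : ∑ j, μ j = N)
    (p : ℂ[X]) (hp : p = ∏ j, (X - C (w j)) ^ μ j)
    (e : ((j : Fin n) × Fin (μ j)) ≃ Fin N)
    (V : Matrix ((j : Fin n) × Fin (μ j)) ((j : Fin n) × Fin (μ j)) ℂ)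
    (hV : ∀ jk c, V jk c =
      (Polynomial.derivative^[(jk.2 : ℕ)] (X ^ ((e c : Fin N) : ℕ) : ℂ[X])).eval (w jk.1))
    (c : (j : Fin n) → Fin (μ j) → ℂ)
    (hc : ∀ z : ℂ, p.eval z ≠ 0 →
      1 / p.eval z = ∑ j, ∑ k : Fin (μ j), c j k / (z - w j) ^ ((k : ℕ) + 1)) :
    ∀ f : ℂ[X],
      ∀ Cw : ((j : Fin n) × Fin (μ j)) → ℂ,
      (∀ jk, Cw jk = (Polynomial.derivative^[(jk.2 : ℕ)] f).eval (w jk.1)) →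
      f - ∑ i : Fin N, C (V⁻¹.mulVec Cw (e.symm i)) * X ^ (i : ℕ)
        = p * ∑ j, ∑ k : Fin (μ j), C (c j k) * (backShift (w j))^[(k : ℕ) + 1] f := by
  classical
  intro f Cw hCw
  -- degenerate case n = 0 is impossible by `hc`
  rcases Nat.eq_zero_or_pos n with hn0 | hn
  · exfalso
    subst hn0
    have h1 := hc 0 (by rw [hp]; simp)
    rw [hp] at h1
    simp at h1
  -- basic facts about p
  have hμN : ∀ j, μ j ≤ N := by
    intro j
    rw [← hN]
    exact Finset.single_le_sum (fun i _ => Nat.zero_le (μ i)) (Finset.mem_univ j)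
  have hN1 : 1 ≤ N := le_trans (hμ ⟨0, hn⟩) (hμN ⟨0, hn⟩)
  have hpmonic : p.Monic := by
    rw [hp]; exact monic_prod_of_monic _ _ fun j _ => (monic_X_sub_C _).pow _
  have hpne : p ≠ 0 := hpmonic.ne_zero
  have hdegp : p.natDegree = N := by
    rw [hp, natDegree_prod _ _ fun j _ => pow_ne_zero _ (X_sub_C_ne_zero _)]
    simp [natDegree_pow, natDegree_X_sub_C, hN]
  -- the cofactor polynomials
  set P : (j : Fin n) → Fin (μ j) → ℂ[X] := fun j k =>
    (X - C (w j)) ^ (μ j - ((k : ℕ) + 1)) *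
      ∏ j' ∈ Finset.univ.erase j, (X - C (w j')) ^ μ j' with hPdef
  have hfact : ∀ (j : Fin n) (k : Fin (μ j)), p = (X - C (w j)) ^ ((k : ℕ) + 1) * P j k := by
    intro j k
    rw [hp, ← Finset.mul_prod_erase _ _ (Finset.mem_univ j), hPdef, ← mul_assoc, ← pow_add]
    congr 2
    have := k.isLt
    omega
  have hPne : ∀ j k, P j k ≠ 0 := by
    intro j k
    rw [hPdef]
    exact mul_ne_zero (pow_ne_zero _ (X_sub_C_ne_zero _))
      (Finset.prod_ne_zero_iff.mpr fun j' _ => pow_ne_zero _ (X_sub_C_ne_zero _))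
  have hPnat : ∀ j k, (P j k).natDegree = N - ((k : ℕ) + 1) := by
    intro j k
    have h1 : p.natDegree = ((k : ℕ) + 1) + (P j k).natDegree := by
      rw [hfact j k, natDegree_mul (pow_ne_zero _ (X_sub_C_ne_zero _)) (hPne j k)]
      simp [natDegree_pow, natDegree_X_sub_C]
    have := k.isLt
    omega
  -- the partial fraction identity as a polynomial identity
  have hE : (∑ j, ∑ k : Fin (μ j), C (c j k) * P j k) = 1 := by
    set E := ∑ j, ∑ k : Fin (μ j), C (c j k) * P j k with hEdef
    have hfin : Set.Finite {z : ℂ | p.IsRoot z} := finite_setOf_isRoot hpne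
    have hsub : {z : ℂ | p.IsRoot z}ᶜ ⊆ {z | (E - 1).IsRoot z} := by
      intro z hz
      simp only [Set.mem_compl_iff, Set.mem_setOf_eq, IsRoot] at hz ⊢
      have h1 := hc z hz
      rw [eval_sub, eval_one, sub_eq_zero]
      have hPz : ∀ (j : Fin n) (k : Fin (μ j)), (P j k).eval z = p.eval z / (z - w j) ^ ((k : ℕ) + 1) := by
        intro j k
        have h2 := congrArg (eval z) (hfact j k)
        rw [eval_mul, eval_pow, eval_sub, eval_X, eval_C] at h2
        have hz2 : (z - w j) ^ ((k : ℕ) + 1) ≠ 0 := by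
          intro h0
          exact hz (by rw [h2, h0, zero_mul])
        rw [eq_div_iff hz2]
        linear_combination -h2
      calc E.eval z = ∑ j, ∑ k : Fin (μ j), c j k * (P j k).eval z := by
            simp [hEdef, eval_finset_sum]
        _ = p.eval z * ∑ j, ∑ k : Fin (μ j), c j k / (z - w j) ^ ((k : ℕ) + 1) := by
            rw [Finset.mul_sum]
            refine Finset.sum_congr rfl fun j _ => ?_
            rw [Finset.mul_sum]
            refine Finset.sum_congr rfl fun k _ => ?_
            rw [hPz j k]
            ring
        _ = p.eval z * (1 / p.eval z) := by rw [← h1]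
        _ = 1 := by field_simp
    have hinf : Set.Infinite {z : ℂ | (E - 1).IsRoot z} :=
      Set.Infinite.mono hsub hfin.infinite_compl
    have h0 := eq_zero_of_infinite_isRoot _ hinf
    exact sub_eq_zero.mp h0
  -- the remainders
  set r : (j : Fin n) → Fin (μ j) → ℂ[X] := fun j k =>
    f - (X - C (w j)) ^ ((k : ℕ) + 1) * (backShift (w j))^[(k : ℕ) + 1] f with hrdef
  have hrdeg : ∀ j k, (r j k).degree < (((k : ℕ) + 1 : ℕ) : WithBot ℕ) := fun j k =>
    degree_sub_backShift_iterate _ _ _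
  set Q := ∑ j, ∑ k : Fin (μ j), C (c j k) * (P j k * r j k) with hQdef
  -- main algebraic identity
  have hPS : p * (∑ j, ∑ k : Fin (μ j), C (c j k) * (backShift (w j))^[(k : ℕ) + 1] f)
      = f - Q := by
    have hterm : ∀ (j : Fin n) (k : Fin (μ j)), p * (C (c j k) * (backShift (w j))^[(k : ℕ) + 1] f)
        = C (c j k) * P j k * f - C (c j k) * (P j k * r j k) := by
      intro j k
      have h1 : (X - C (w j)) ^ ((k : ℕ) + 1) * (backShift (w j))^[(k : ℕ) + 1] f
          = f - r j k := by rw [hrdef]; ring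
      linear_combination (C (c j k) * (backShift (w j))^[(k : ℕ) + 1] f) * (hfact j k)
        + (C (c j k) * P j k) * h1
    calc p * (∑ j, ∑ k : Fin (μ j), C (c j k) * (backShift (w j))^[(k : ℕ) + 1] f)
        = ∑ j, ∑ k : Fin (μ j),
            (C (c j k) * P j k * f - C (c j k) * (P j k * r j k)) := by
          rw [Finset.mul_sum]
          refine Finset.sum_congr rfl fun j _ => ?_
          rw [Finset.mul_sum]
          exact Finset.sum_congr rfl fun k _ => hterm j k
      _ = (∑ j, ∑ k : Fin (μ j), C (c j k) * P j k) * f - Q := by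
          rw [hQdef, Finset.sum_mul, ← Finset.sum_sub_distrib]
          refine Finset.sum_congr rfl fun j _ => ?_
          rw [Finset.sum_mul, ← Finset.sum_sub_distrib]
      _ = f - Q := by rw [hE, one_mul]
  -- degree bound on Q
  have hQdeg : Q.degree < (N : WithBot ℕ) := by
    rw [hQdef]
    refine lt_of_le_of_lt (degree_sum_le _ _) ?_
    rw [Finset.sup_lt_iff (by exact_mod_cast WithBot.bot_lt_coe N)]
    intro j _
    refine lt_of_le_of_lt (degree_sum_le _ _) ?_
    rw [Finset.sup_lt_iff (by exact_mod_cast WithBot.bot_lt_coe N)]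
    intro k _
    rcases eq_or_ne (r j k) 0 with h0 | h0
    · simp only [h0, mul_zero, degree_zero]
      exact_mod_cast WithBot.bot_lt_coe N
    · have hrd : (r j k).natDegree ≤ (k : ℕ) := by
        have := (natDegree_lt_iff_degree_lt h0).mpr (hrdeg j k)
        omega
      have hklt := k.isLt
      have hjN := hμN j
      calc (C (c j k) * (P j k * r j k)).degree
          ≤ (C (c j k)).degree + (P j k * r j k).degree := degree_mul_le _ _
        _ ≤ 0 + (P j k * r j k).degree := add_le_add_left degree_C_le _
        _ = (P j k * r j k).degree := by rw [zero_add]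
        _ ≤ ((P j k * r j k).natDegree : WithBot ℕ) := degree_le_natDegree
        _ ≤ (((P j k).natDegree + (r j k).natDegree : ℕ) : WithBot ℕ) := by
            exact_mod_cast natDegree_mul_le
        _ < (N : WithBot ℕ) := by
            have := hPnat j k
            exact_mod_cast (by omega : (P j k).natDegree + (r j k).natDegree < N)
  have hQnat : Q.natDegree < N := by
    rcases eq_or_ne Q 0 with h0 | h0
    · rw [h0, natDegree_zero]; omega
    · exact (natDegree_lt_iff_degree_lt h0).mpr hQdeg
  -- derivative matching
  have hmatch : ∀ jk : (j : Fin n) × Fin (μ j),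
      (Polynomial.derivative^[(jk.2 : ℕ)] Q).eval (w jk.1) = Cw jk := by
    intro jk
    rw [hCw jk]
    have hdvd : (X - C (w jk.1)) ^ μ jk.1 ∣ (f - Q) := by
      rw [← hPS]
      exact Dvd.dvd.mul_right (hp ▸ Finset.dvd_prod_of_mem _ (Finset.mem_univ jk.1)) _
    have h0 := iterate_derivative_eval_eq_zero hdvd jk.2.isLt
    rw [iterate_derivative_sub, eval_sub, sub_eq_zero] at h0
    exact h0.symm
  -- computing mulVec against polynomials built from vectors
  have hmv : ∀ (v : ((j : Fin n) × Fin (μ j)) → ℂ) (jk : (j : Fin n) × Fin (μ j)),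
      V.mulVec v jk = (Polynomial.derivative^[(jk.2 : ℕ)]
        (∑ cc : (j : Fin n) × Fin (μ j), C (v cc) * X ^ ((e cc : Fin N) : ℕ))).eval
          (w jk.1) := by
    intro v jk
    rw [iterate_derivative_sum, eval_finset_sum]
    simp only [iterate_derivative_C_mul, eval_mul, eval_C]
    simp only [Matrix.mulVec, dotProduct, hV]
    exact Finset.sum_congr rfl fun cc _ => mul_comm _ _
  set b : ((j : Fin n) × Fin (μ j)) → ℂ := fun cc => Q.coeff ((e cc : Fin N) : ℕ) with hbdef
  have hQsum : (∑ cc : (j : Fin n) × Fin (μ j), C (b cc) * X ^ ((e cc : Fin N) : ℕ)) = Q := by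
    rw [hbdef]
    rw [Equiv.sum_comp e (fun i : Fin N => C (Q.coeff (i : ℕ)) * X ^ (i : ℕ))]
    rw [Fin.sum_univ_eq_sum_range (fun i : ℕ => C (Q.coeff i) * X ^ i) N]
    simp_rw [C_mul_X_pow_eq_monomial]
    exact (as_sum_range' Q N hQnat).symm
  have hVb : V.mulVec b = Cw := by
    funext jk
    rw [hmv b jk, hQsum]
    exact hmatch jk
  -- V is invertible
  have hdet : IsUnit V.det := by
    rw [isUnit_iff_ne_zero]
    intro hdet0
    obtain ⟨v, hvne, hv0⟩ := Matrix.exists_mulVec_eq_zero_iff.mpr hdet0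
    set h := ∑ cc : (j : Fin n) × Fin (μ j), C (v cc) * X ^ ((e cc : Fin N) : ℕ) with hhdef
    have hder : ∀ jk : (j : Fin n) × Fin (μ j),
        (Polynomial.derivative^[(jk.2 : ℕ)] h).eval (w jk.1) = 0 := by
      intro jk
      rw [← hmv v jk, hv0]
      rfl
    have hdvd : ∀ j, (X - C (w j)) ^ μ j ∣ h := by
      intro j
      apply dvd_of_iterate_derivative_eval_eq_zero (hμ j)
      intro k hk
      exact hder ⟨j, ⟨k, hk⟩⟩
    have hpdvd : p ∣ h := by
      rw [hp]
      refine Finset.prod_dvd_of_coprime (fun a _ b _ hab => ?_) fun j _ => hdvd j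
      exact (pairwise_coprime_X_sub_C hw hab).pow
    have hhdeg : h.degree < p.degree := by
      rw [degree_eq_natDegree hpne, hdegp]
      refine lt_of_le_of_lt (degree_sum_le _ _) ?_
      rw [Finset.sup_lt_iff (by exact_mod_cast WithBot.bot_lt_coe N)]
      intro cc _
      refine lt_of_le_of_lt (degree_C_mul_X_pow_le _ _) ?_
      exact_mod_cast WithBot.coe_lt_coe.mpr (e cc).isLt
    have hzero : h = 0 := eq_zero_of_dvd_of_degree_lt hpdvd hhdeg
    apply hvne
    funext cc
    have hcoeff : h.coeff ((e cc : Fin N) : ℕ) = v cc := by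
      rw [hhdef, finset_sum_coeff]
      rw [Finset.sum_eq_single cc]
      · simp [coeff_C_mul, coeff_X_pow]
      · intro d _ hd
        rw [coeff_C_mul, coeff_X_pow, if_neg, mul_zero]
        intro heq
        exact hd (e.injective (Fin.ext heq)).symm
      · intro hcc
        exact absurd (Finset.mem_univ cc) hcc
    rw [Pi.zero_apply, ← hcoeff, hzero, coeff_zero]
  have hinv : V⁻¹.mulVec Cw = b := by
    rw [← hVb, Matrix.mulVec_mulVec, Matrix.nonsing_inv_mul V hdet, Matrix.one_mulVec]
  -- conclusion
  have hfinal : (∑ i : Fin N, C (b (e.symm i)) * X ^ (i : ℕ)) = Q := by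
    simp only [hbdef, Equiv.apply_symm_apply]
    rw [Fin.sum_univ_eq_sum_range (fun i : ℕ => C (Q.coeff i) * X ^ i) N]
    simp_rw [C_mul_X_pow_eq_monomial]
    exact (as_sum_range' Q N hQnat).symm
  rw [hinv, hfinal, ← hPS]
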